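/- There exists a one-generated left self-distributive algebra (A, *) in which the relation a < b, defined by b = ((a * b_1) * ⋯) * b_k for some b_1, …, b_k, is irreflexive: namely the subalgebra of (B_∞, *) generated by the identity braid, where α * β = α · s(β) · σ_1 · s(α^{-1}). -/

import Mathlib

/-- The free group on generators `x 1, x 2, x 3, …`. -/
abbrev F := FreeGroup ℕ+

/-- The generators of `F`. -/
noncomputable def x (i : ℕ+) : F := FreeGroup.of i

/-- `σ` is the family of Artin automorphisms:
`σ i (x i) = x i * x (i+1) * (x i)⁻¹`, `σ i (x (i+1)) = x i`, `σ i (x j) = x j` otherwise. -/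
def IsArtin (σ : ℕ+ → MulAut F) : Prop :=
  ∀ i : ℕ+, σ i (x i) = x i * x (i + 1) * (x i)⁻¹ ∧ σ i (x (i + 1)) = x i ∧
    ∀ j : ℕ+, j ≠ i → j ≠ i + 1 → σ i (x j) = x j

/-- The set of nontrivial elements of `F` whose reduced word neither begins
nor ends with `x 1` or `(x 1)⁻¹`. -/
def W : Set F :=
  {w | w ≠ 1 ∧ (∀ p ∈ w.toWord.head?, p.1 ≠ 1) ∧ (∀ p ∈ w.toWord.getLast?, p.1 ≠ 1)}
/-- The braid relations on the free group over the generator indices. -/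
def braidRels : Set (FreeGroup ℕ+) :=
  {r | (∃ i : ℕ+, r = .of i * .of (i + 1) * .of i * (.of (i + 1) * .of i * .of (i + 1))⁻¹) ∨
       (∃ i j : ℕ+, i + 1 < j ∧ r = .of i * .of j * (.of j * .of i)⁻¹)}

/-- The braid group `B_∞` on infinitely many strands. -/
abbrev Binf := PresentedGroup braidRels

/-- The generators `σ 1, σ 2, …` of `B_∞`. -/
noncomputable def σB (i : ℕ+) : Binf := PresentedGroup.of i

lemma pnat_ne {a b : ℕ+} (h : (a:ℕ) ≠ (b:ℕ)) : a ≠ b := fun e => h (by rw [e])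

noncomputable def artinFun (i j : ℕ+) : F :=
  if j = i then x i * x (i+1) * (x i)⁻¹ else if j = i + 1 then x i else x j
noncomputable def artinInvFun (i j : ℕ+) : F :=
  if j = i then x (i+1) else if j = i + 1 then (x (i+1))⁻¹ * x i * x (i+1) else x j
noncomputable def artinHom (i : ℕ+) : F →* F := FreeGroup.lift (artinFun i)
noncomputable def artinInvHom (i : ℕ+) : F →* F := FreeGroup.lift (artinInvFun i)

lemma artinHom_of (i j : ℕ+) : artinHom i (FreeGroup.of j) = artinFun i j := FreeGroup.lift_apply_of
lemma artinInvHom_of (i j : ℕ+) : artinInvHom i (FreeGroup.of j) = artinInvFun i j := FreeGroup.lift_apply_of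

lemma ne1 (i : ℕ+) : i ≠ i + 1 := pnat_ne (by push_cast; omega)
lemma ne2 (i : ℕ+) : i + 1 ≠ i := (ne1 i).symm

lemma comp1 (i : ℕ+) : (artinHom i).comp (artinInvHom i) = MonoidHom.id F := by
  apply FreeGroup.ext_hom; intro j
  simp only [MonoidHom.comp_apply, MonoidHom.id_apply, artinInvHom_of, artinInvFun]
  rcases eq_or_ne j i with rfl | h1
  · simp [ne2, artinHom_of, artinFun, x]
  · rcases eq_or_ne j (i+1) with rfl | h2
    · simp [map_mul, map_inv, artinHom_of, artinFun, ne2, x]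
      group
    · simp [h1, h2, artinHom_of, artinFun, x]

lemma comp2 (i : ℕ+) : (artinInvHom i).comp (artinHom i) = MonoidHom.id F := by
  apply FreeGroup.ext_hom; intro j
  simp only [MonoidHom.comp_apply, MonoidHom.id_apply, artinHom_of, artinFun]
  rcases eq_or_ne j i with rfl | h1
  · simp [map_mul, map_inv, artinInvHom_of, artinInvFun, ne2, x]
    group
  · rcases eq_or_ne j (i+1) with rfl | h2
    · simp [artinInvHom_of, artinInvFun, ne2, x]
    · simp [h1, h2, artinInvHom_of, artinInvFun, x]

noncomputable def artin (i : ℕ+) : MulAut F :=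
  MonoidHom.toMulEquiv (artinHom i) (artinInvHom i) (comp2 i) (comp1 i)

lemma artin_x (i j : ℕ+) : artin i (x j) = artinFun i j := FreeGroup.lift_apply_of

lemma af_self (i : ℕ+) : artinFun i i = x i * x (i+1) * (x i)⁻¹ := if_pos rfl
lemma af_succ (i : ℕ+) : artinFun i (i+1) = x i := by
  rw [artinFun, if_neg (ne2 i), if_pos rfl]
lemma af_other {i j : ℕ+} (h1 : j ≠ i) (h2 : j ≠ i + 1) : artinFun i j = x j := by
  rw [artinFun, if_neg h1, if_neg h2]

lemma artin_braid (i : ℕ+) :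
    artin i * artin (i+1) * artin i = artin (i+1) * artin i * artin (i+1) := by
  have e1 : i ≠ i + 1 := ne1 i
  have e2 : i + 1 ≠ i := ne2 i
  have e3 : i ≠ i + 1 + 1 := pnat_ne (by push_cast; omega)
  have e4 : i + 1 + 1 ≠ i := e3.symm
  have e5 : i + 1 + 1 ≠ i + 1 := ne2 (i+1)
  apply MulEquiv.toMonoidHom_injective
  apply FreeGroup.ext_hom; intro j
  show (artin i * artin (i+1) * artin i) (x j) = (artin (i+1) * artin i * artin (i+1)) (x j)
  simp only [MulAut.mul_apply]
  rcases eq_or_ne j i with rfl | h1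
  · simp [artin_x, af_self, af_succ, af_other, e1, e2, e3, e4, e5, map_mul, map_inv] <;> group
  rcases eq_or_ne j (i+1) with rfl | h2
  · simp [artin_x, af_self, af_succ, af_other, e1, e2, e3, e4, e5, map_mul, map_inv] <;> group
  rcases eq_or_ne j (i+1+1) with rfl | h3
  · simp [artin_x, af_self, af_succ, af_other, e1, e2, e3, e4, e5, map_mul, map_inv] <;> group
  · simp [artin_x, af_other h1 h2, af_other h2 h3]

lemma artin_comm {i j : ℕ+} (hij : i + 1 < j) : artin i * artin j = artin j * artin i := by
  have e1 : i ≠ j := pnat_ne (by have := (PNat.coe_lt_coe _ _).2 hij; push_cast at this ⊢; omega)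
  have e2 : i ≠ j + 1 := pnat_ne (by have := (PNat.coe_lt_coe _ _).2 hij; push_cast at this ⊢; omega)
  have e3 : i + 1 ≠ j := pnat_ne (by have := (PNat.coe_lt_coe _ _).2 hij; push_cast at this ⊢; omega)
  have e4 : i + 1 ≠ j + 1 := pnat_ne (by have := (PNat.coe_lt_coe _ _).2 hij; push_cast at this ⊢; omega)
  have e5 : j ≠ i := e1.symm
  have e6 : j ≠ i + 1 := e3.symm
  have e7 : j + 1 ≠ i := e2.symm
  have e8 : j + 1 ≠ i + 1 := e4.symm
  apply MulEquiv.toMonoidHom_injective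
  apply FreeGroup.ext_hom; intro k
  show (artin i * artin j) (x k) = (artin j * artin i) (x k)
  simp only [MulAut.mul_apply]
  rcases eq_or_ne k i with rfl | h1
  · simp [artin_x, af_self, af_succ, af_other, e1, e2, e3, e4, e5, e6, e7, e8, map_mul, map_inv] <;> group
  rcases eq_or_ne k (i+1) with rfl | h2
  · simp [artin_x, af_self, af_succ, af_other, e1, e2, e3, e4, e5, e6, e7, e8, map_mul, map_inv] <;> group
  rcases eq_or_ne k j with rfl | h3
  · simp [artin_x, af_self, af_succ, af_other, e1, e2, e3, e4, e5, e6, e7, e8, map_mul, map_inv] <;> group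
  rcases eq_or_ne k (j+1) with rfl | h4
  · simp [artin_x, af_self, af_succ, af_other, e1, e2, e3, e4, e5, e6, e7, e8, map_mul, map_inv] <;> group
  · simp [artin_x, af_other h1 h2, af_other h3 h4]

lemma rel_one {r : FreeGroup ℕ+} (hr : r ∈ braidRels) :
    PresentedGroup.mk braidRels r = 1 :=
  (QuotientGroup.eq_one_iff r).mpr (Subgroup.subset_normalClosure hr)

lemma braidB (i : ℕ+) : σB i * σB (i+1) * σB i = σB (i+1) * σB i * σB (i+1) := by
  have h := rel_one (Or.inl ⟨i, rfl⟩)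
  simp only [map_mul, map_inv, mul_inv_eq_one] at h
  exact h

lemma commB {i j : ℕ+} (hij : i + 1 < j) : σB i * σB j = σB j * σB i := by
  have h := rel_one (Or.inr ⟨i, j, hij, rfl⟩)
  simp only [map_mul, map_inv, mul_inv_eq_one] at h
  exact h

lemma artin_rels : ∀ r ∈ braidRels, FreeGroup.lift artin r = 1 := by
  rintro r (⟨i, rfl⟩ | ⟨i, j, hij, rfl⟩) <;>
    simp only [map_mul, map_inv, FreeGroup.lift_apply_of, mul_inv_eq_one]
  · exact artin_braid i
  · exact artin_comm hij

noncomputable def ρ : Binf →* MulAut F := PresentedGroup.toGroup artin_rels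

lemma ρ_σB (i : ℕ+) : ρ (σB i) = artin i := PresentedGroup.toGroup.of artin_rels

namespace WordCore

/-- the no-cancellation relation between adjacent letters -/
def RR (a b : ℕ+ × Bool) : Prop := ¬(a.1 = b.1 ∧ a.2 = !b.2)

lemma reduce_eq_self_of_chain {L : List (ℕ+ × Bool)} (h : List.Chain' RR L) :
    FreeGroup.reduce L = L := by
  induction L with
  | nil => rfl
  | cons a t ih =>
    have ht : List.Chain' RR t := h.tail
    rw [FreeGroup.reduce.cons, ih ht]
    cases t with
    | nil => rfl
    | cons b t' =>
      have hab : RR a b := List.isChain_cons_cons.mp h |>.1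
      simp only [RR] at hab
      show (if a.1 = b.1 ∧ a.2 = !b.2 then t' else a :: b :: t') = a :: b :: t'
      rw [if_neg hab]

lemma not_chain_decomp {L : List (ℕ+ × Bool)} (h : ¬ List.Chain' RR L) :
    ∃ (L₂ L₃ : List (ℕ+ × Bool)) (c : ℕ+) (b : Bool),
      L = L₂ ++ (c, b) :: (c, !b) :: L₃ := by
  induction L with
  | nil => exact absurd List.isChain_nil h
  | cons a t ih =>
    cases t with
    | nil => exact absurd (List.isChain_singleton a) h
    | cons b t' =>
      change ¬ List.IsChain RR (a :: b :: t') at h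
      rw [List.isChain_cons_cons] at h
      push_neg at h
      by_cases hab : RR a b
      · obtain ⟨L₂, L₃, c, bb, he⟩ := ih (h hab)
        exact ⟨a :: L₂, L₃, c, bb, by rw [he]; rfl⟩
      · simp only [RR, not_not] at hab
        refine ⟨[], t', a.1, a.2, ?_⟩
        obtain ⟨h1, h2⟩ := hab
        have hb : b = (a.1, !a.2) := Prod.ext h1.symm (by rw [h2, Bool.not_not])
        rw [List.nil_append, ← hb]

lemma chain_of_reduce_eq_self {L : List (ℕ+ × Bool)} (h : FreeGroup.reduce L = L) :
    List.Chain' RR L := by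
  by_contra hc
  obtain ⟨L₂, L₃, c, b, he⟩ := not_chain_decomp hc
  exact FreeGroup.reduce.not (by rw [h, he])

lemma chain_toWord (w : F) : List.Chain' RR w.toWord :=
  chain_of_reduce_eq_self (FreeGroup.reduce_toWord w)

lemma toWord_mk_of_chain {L : List (ℕ+ × Bool)} (h : List.Chain' RR L) :
    (FreeGroup.mk L).toWord = L := by
  rw [FreeGroup.toWord_mk, reduce_eq_self_of_chain h]

/-- junction lemma : if no cancellation at the junction, words concatenate -/
lemma toWord_mul {v u : F}
    (h : ∀ a ∈ v.toWord.getLast?, ∀ b ∈ u.toWord.head?, RR a b) :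
    (v * u).toWord = v.toWord ++ u.toWord := by
  have hvu : v * u = FreeGroup.mk (v.toWord ++ u.toWord) := by
    rw [← FreeGroup.mul_mk, FreeGroup.mk_toWord, FreeGroup.mk_toWord]
  rw [hvu]
  exact toWord_mk_of_chain (List.isChain_append.mpr ⟨chain_toWord v, chain_toWord u, h⟩)

lemma toWord_inv_single (i : ℕ+) : (FreeGroup.of i : F)⁻¹.toWord = [(i, false)] := by
  rw [FreeGroup.toWord_inv, FreeGroup.toWord_of]
  rfl

lemma toWord_pow_pos (i : ℕ+) (n : ℕ) :
    ((FreeGroup.of i : F) ^ n).toWord = List.replicate n (i, true) :=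
  FreeGroup.toWord_of_pow i n

lemma toWord_pow_neg (i : ℕ+) (n : ℕ) :
    (((FreeGroup.of i : F)⁻¹) ^ n).toWord = List.replicate n (i, false) := by
  rw [inv_pow, FreeGroup.toWord_inv, FreeGroup.toWord_of_pow]
  simp [FreeGroup.invRev, List.map_replicate]

lemma toWord_gpow (i : ℕ+) (ε : Bool) (n : ℕ) :
    ((cond ε (FreeGroup.of i) (FreeGroup.of i)⁻¹ : F) ^ n).toWord = List.replicate n (i, ε) := by
  cases ε
  · exact toWord_pow_neg i n
  · exact toWord_pow_pos i n

end WordCore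

namespace WordCore

lemma run_const {M : List (ℕ+ × Bool)} (hc : List.Chain' RR M)
    (h1 : ∀ p ∈ M, p.1 = (1 : ℕ+)) : ∀ p ∈ M, ∀ q ∈ M, p.2 = q.2 := by
  induction M with
  | nil => simp
  | cons a t ih =>
    have key : ∀ q ∈ t, a.2 = q.2 := by
      intro q hq
      cases t with
      | nil => simp at hq
      | cons b t' =>
        have hab : RR a b := (List.isChain_cons_cons.mp hc).1
        have h1a : a.1 = (1 : ℕ+) := h1 a (by simp)
        have h1b : b.1 = (1 : ℕ+) := h1 b (by simp)
        have hab2 : a.2 = b.2 := by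
          simp only [RR, h1a, h1b, true_and, not_and] at hab
          cases ha : a.2 <;> cases hb : b.2 <;> simp_all
        have := ih hc.tail (fun p hp => h1 p (List.mem_cons_of_mem _ hp)) b (by simp) q hq
        rw [hab2, this]
    have trip : ∀ r ∈ a :: t, r.2 = a.2 := by
      intro r hr
      rcases List.mem_cons.mp hr with rfl | hr
      · rfl
      · exact (key r hr).symm
    intro p hp q hq
    rw [trip p hp, trip q hq]

/-- generic splitting of the last "run" of a reduced word -/
lemma split_last (w : F) (hw : w ≠ 1) (P : ℕ+ × Bool → Bool)
    (hP : ∀ ℓ ∈ w.toWord.getLast?, P ℓ = true) :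
    ∃ v u : F, w = v * u ∧ u.toWord ≠ [] ∧ (∀ p ∈ u.toWord, P p = true) ∧
      (v = 1 ∨ ∃ d, v.toWord.getLast? = some d ∧ P d = false) ∧
      v.toWord.length < w.toWord.length ∧
      w.toWord.getLast? = u.toWord.getLast? ∧
      List.Chain' RR u.toWord := by
  set L := w.toWord with hLdef
  have hL : L ≠ [] := fun h => hw (FreeGroup.toWord_eq_nil_iff.mp h)
  set Lr := L.reverse with hLr
  have hLrne : Lr ≠ [] := by simpa [hLr] using hL
  obtain ⟨a, tl, hcons⟩ := List.exists_cons_of_ne_nil hLrne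
  have hhead : L.getLast? = some a := by
    rw [← List.head?_reverse, ← hLr, hcons]; rfl
  have hPa : P a = true := hP a (by rw [hhead]; rfl)
  set T := Lr.takeWhile P with hT
  set D := Lr.dropWhile P with hD
  have hTD : T ++ D = Lr := by rw [hT, hD, List.takeWhile_append_dropWhile]
  have hTne : T ≠ [] := by
    rw [hT, hcons, List.takeWhile_cons_of_pos hPa]
    simp
  set L₁ := D.reverse with hL1
  set L₂ := T.reverse with hL2
  have hsplit : L = L₁ ++ L₂ := by
    rw [hL1, hL2, ← List.reverse_append, hTD, hLr, List.reverse_reverse]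
  have hL2ne : L₂ ≠ [] := by simpa [hL2] using hTne
  have hchain : List.Chain' RR L := chain_toWord w
  have hchain1 : List.Chain' RR L₁ := hchain.prefix ⟨L₂, hsplit.symm⟩
  have hchain2 : List.Chain' RR L₂ := hchain.suffix ⟨L₁, hsplit.symm⟩
  refine ⟨FreeGroup.mk L₁, FreeGroup.mk L₂, ?_, ?_, ?_, ?_, ?_, ?_, ?_⟩
  · rw [FreeGroup.mul_mk, ← hsplit, hLdef, FreeGroup.mk_toWord]
  · rw [toWord_mk_of_chain hchain2]; exact hL2ne
  · rw [toWord_mk_of_chain hchain2]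
    intro p hp
    exact List.mem_takeWhile_imp (by simpa [hL2] using hp)
  · rw [toWord_mk_of_chain hchain1]
    rcases hD1 : D with _ | ⟨d, D'⟩
    · left
      rw [hL1, hD1, List.reverse_nil, FreeGroup.one_eq_mk]
    · right
      refine ⟨d, ?_, ?_⟩
      · rw [hL1, hD1, List.getLast?_reverse]; rfl
      · have := List.find?_not_eq_head?_dropWhile P Lr
        rw [← hD, hD1] at this
        have hfind : Lr.find? (fun x => !P x) = some d := by rw [this]; rfl
        have := List.find?_some hfind
        simpa using this
  · rw [toWord_mk_of_chain hchain1, hsplit, List.length_append]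
    have : 0 < L₂.length := List.length_pos_iff.mpr hL2ne
    omega
  · rw [toWord_mk_of_chain hchain2, hsplit, List.getLast?_append_of_ne_nil _ hL2ne]
  · rw [toWord_mk_of_chain hchain2]; exact hchain2

end WordCore

namespace WordCore

def CH (w : F) : Prop := ∃ p, w.toWord.getLast? = some p ∧ p.1 ≠ 1
def CG (w : F) : Prop := ∃ p, w.toWord.getLast? = some p ∧ p.1 ≠ 2

lemma peel1 (w : F) (hw : w ≠ 1) (ℓ : ℕ+ × Bool)
    (hℓ : w.toWord.getLast? = some ℓ) (h1 : ℓ.1 = 1) :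
    ∃ (v : F) (k : ℕ) (ε : Bool),
      w = v * (cond ε (FreeGroup.of 1) (FreeGroup.of 1)⁻¹ : F) ^ (k+1) ∧
      (v = 1 ∨ CH v) ∧ v.toWord.length < w.toWord.length ∧
      w.toWord.getLast? = some (1, ε) := by
  obtain ⟨v, u, hvu, hune, hall, hvcl, hlen, hlast, hchain⟩ :=
    split_last w hw (fun p => decide (p.1 = 1)) (by
      intro p hp
      rw [hℓ] at hp
      simp at hp
      simp [← hp, h1])
  have hall' : ∀ p ∈ u.toWord, p.1 = (1 : ℕ+) := by
    intro p hp
    simpa using hall p hp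
  have hℓu : u.toWord.getLast? = some ℓ := by rw [← hlast, hℓ]
  have hℓmem : ℓ ∈ u.toWord := by
    obtain ⟨h, he⟩ := List.mem_getLast?_eq_getLast (show ℓ ∈ u.toWord.getLast? by rw [hℓu]; rfl)
    rw [he]
    exact List.getLast_mem h
  have hrep : u.toWord = List.replicate u.toWord.length ((1 : ℕ+), ℓ.2) := by
    apply List.eq_replicate_of_mem
    intro p hp
    have h2 := run_const hchain hall' p hp ℓ hℓmem
    have hone := hall' p hp
    exact Prod.ext_iff.mpr ⟨hone, h2⟩
  obtain ⟨k, hk⟩ : ∃ k, u.toWord.length = k + 1 := by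
    rcases Nat.exists_eq_succ_of_ne_zero (fun h => hune (List.length_eq_zero_iff.mp h)) with ⟨k, hk⟩
    exact ⟨k, hk⟩
  have hu : u = (cond ℓ.2 (FreeGroup.of 1) (FreeGroup.of 1)⁻¹ : F) ^ (k + 1) := by
    apply FreeGroup.toWord_injective
    rw [toWord_gpow, hrep, hk]
  refine ⟨v, k, ℓ.2, by rw [hvu, hu], ?_, hlen, ?_⟩
  · rcases hvcl with h | ⟨d, hd, hPd⟩
    · exact Or.inl h
    · exact Or.inr ⟨d, hd, by simpa using hPd⟩
  · rw [hℓ]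
    congr 1
    exact Prod.ext_iff.mpr ⟨h1, rfl⟩

lemma peel2 (w : F) (hw : w ≠ 1) (ℓ : ℕ+ × Bool)
    (hℓ : w.toWord.getLast? = some ℓ) (h1 : ℓ.1 ≠ 1) :
    ∃ (v u : F), w = v * u ∧ (∀ p ∈ u.toWord, p.1 ≠ (1 : ℕ+)) ∧ u ≠ 1 ∧
      (v = 1 ∨ ∃ ε : Bool, v.toWord.getLast? = some (1, ε)) ∧
      v.toWord.length < w.toWord.length ∧
      u.toWord.getLast? = some ℓ := by
  obtain ⟨v, u, hvu, hune, hall, hvcl, hlen, hlast, hchain⟩ :=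
    split_last w hw (fun p => decide (p.1 ≠ 1)) (by
      intro p hp
      rw [hℓ] at hp
      simp at hp
      simp [← hp, h1])
  refine ⟨v, u, hvu, fun p hp => by simpa using hall p hp,
    fun h => hune (by rw [h, FreeGroup.toWord_one]), ?_, hlen, by rw [← hlast, hℓ]⟩
  rcases hvcl with h | ⟨d, hd, hPd⟩
  · exact Or.inl h
  · refine Or.inr ⟨d.2, ?_⟩
    have : d.1 = (1 : ℕ+) := by simpa using hPd
    rw [hd]
    congr 1
    exact Prod.ext_iff.mpr ⟨this, rfl⟩

end WordCore

namespace WordCore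

lemma classMap (e : F →* F) (m : ℕ+) (hinj : Function.Injective e)
    (he1 : e (FreeGroup.of 1) = FreeGroup.of m)
    (hH : ∀ w : F, (∀ p ∈ w.toWord, p.1 ≠ (1 : ℕ+)) → ∀ p ∈ (e w).toWord, p.1 ≠ m) :
    ∀ (n : ℕ) (w : F), w.toWord.length ≤ n →
      (∀ ε : Bool, w.toWord.getLast? = some (1, ε) →
        (e w).toWord.getLast? = some (m, ε)) ∧
      (CH w → ∃ p, (e w).toWord.getLast? = some p ∧ p.1 ≠ m) := by
  intro n
  induction n with
  | zero =>
    intro w hl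
    have : w.toWord = [] := List.length_eq_zero_iff.mp (Nat.le_zero.mp hl)
    constructor
    · intro ε hε; rw [this] at hε; simp at hε
    · rintro ⟨p, hp, -⟩; rw [this] at hp; simp at hp
  | succ n ih =>
    intro w hl
    by_cases hw1 : w = 1
    · subst hw1
      constructor
      · intro ε hε; rw [FreeGroup.toWord_one] at hε; simp at hε
      · rintro ⟨p, hp, -⟩; rw [FreeGroup.toWord_one] at hp; simp at hp
    obtain ⟨ℓ, hℓ⟩ : ∃ ℓ, w.toWord.getLast? = some ℓ := by
      have : w.toWord ≠ [] := fun h => hw1 (FreeGroup.toWord_eq_nil_iff.mp h)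
      rcases h : w.toWord.getLast? with _ | ℓ
      · exact absurd (List.getLast?_eq_none_iff.mp h) this
      · exact ⟨ℓ, rfl⟩
    by_cases hℓ1 : ℓ.1 = 1
    -- x₁-run case
    · obtain ⟨v, k, ε, hdec, hvcl, hlen, hwlast⟩ := peel1 w hw1 ℓ hℓ hℓ1
      have hvlen : v.toWord.length ≤ n := by omega
      have hew : e w = e v * (cond ε (FreeGroup.of m) (FreeGroup.of m)⁻¹ : F) ^ (k + 1) := by
        rw [hdec, map_mul, map_pow]
        congr 2
        cases ε
        · simp [map_inv, he1]
        · simp [he1]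
      have hjw : (e w).toWord
          = (e v).toWord ++ List.replicate (k + 1) (m, ε) := by
        rw [hew, toWord_mul, toWord_gpow]
        intro a ha b hb
        rw [toWord_gpow] at hb
        have hb' : b = (m, ε) := by
          have : (List.replicate (k + 1) ((m : ℕ+), ε)).head? = some (m, ε) := by
            rw [List.replicate_succ]; rfl
          rw [this] at hb
          exact (by simpa using hb : (m, ε) = b).symm
        subst hb'
        rcases hvcl with rfl | hCH
        · rw [map_one, FreeGroup.toWord_one] at ha; simp at ha
        · obtain ⟨p, hp, hpne⟩ := (ih v hvlen).2 hCH
          rw [hp] at ha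
          have : a = p := (by simpa using ha : p = a).symm
          subst this
          exact fun hcon => hpne hcon.1
      have hewlast : (e w).toWord.getLast? = some (m, ε) := by
        rw [hjw, List.getLast?_append_of_ne_nil _ (by simp),
          List.replicate_succ', List.getLast?_concat]
      constructor
      · intro ε₀ hε₀
        have heq : ε₀ = ε := by
          rw [hwlast] at hε₀
          have := Option.some_injective _ hε₀
          exact ((by simpa [Prod.ext_iff] using this : ε = ε₀)).symm
        rw [← heq] at hewlast
        exact hewlast
      · rintro ⟨p, hp, hpne⟩
        rw [hwlast] at hp
        have : p = ((1 : ℕ+), ε) := by simpa using hp.symm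
        exact absurd (by rw [this]) hpne
    -- H-run case
    · obtain ⟨v, u, hdec, hu1, hune, hvcl, hlen, hulast⟩ := peel2 w hw1 ℓ hℓ hℓ1
      have hvlen : v.toWord.length ≤ n := by omega
      have heune : e u ≠ 1 := fun h => hune (hinj (by rw [h, map_one]))
      have heuw : (e u).toWord ≠ [] := fun h => heune (FreeGroup.toWord_eq_nil_iff.mp h)
      have heuall : ∀ p ∈ (e u).toWord, p.1 ≠ m := hH u hu1
      have hjw : (e w).toWord = (e v).toWord ++ (e u).toWord := by
        rw [hdec, map_mul, toWord_mul]
        intro a ha b hb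
        have hbne : b.1 ≠ m := heuall b (List.mem_of_mem_head? hb)
        rcases hvcl with rfl | ⟨ε', hε'⟩
        · rw [map_one, FreeGroup.toWord_one] at ha; simp at ha
        · have := (ih v hvlen).1 ε' hε'
          rw [this] at ha
          have : a = ((m : ℕ+), ε') := (by simpa using ha : ((m : ℕ+), ε') = a).symm
          subst this
          exact fun hcon => hbne hcon.1.symm
      obtain ⟨q, hq⟩ : ∃ q, (e u).toWord.getLast? = some q := by
        rcases h : (e u).toWord.getLast? with _ | q
        · exact absurd (List.getLast?_eq_none_iff.mp h) heuw
        · exact ⟨q, rfl⟩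
      have hewlast : (e w).toWord.getLast? = some q := by
        rw [hjw, List.getLast?_append_of_ne_nil _ heuw, hq]
      constructor
      · intro ε₀ hε₀
        rw [hℓ] at hε₀
        have : ℓ = ((1 : ℕ+), ε₀) := by simpa using hε₀
        exact absurd (by rw [this]) hℓ1
      · intro _
        exact ⟨q, hewlast, heuall q (by
          obtain ⟨hne, he⟩ := List.mem_getLast?_eq_getLast (show q ∈ (e u).toWord.getLast? by rw [hq]; rfl)
          rw [he]; exact List.getLast_mem hne)⟩

end WordCore

namespace WordCore

lemma getLast?_x1_mul {z : F} {p : ℕ+ × Bool} (hz : z.toWord.getLast? = some p)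
    (hne : z ≠ (FreeGroup.of 1)⁻¹) :
    ((FreeGroup.of 1 : F) * z).toWord.getLast? = some p := by
  have h1 : (FreeGroup.of 1 : F) * z = FreeGroup.mk (((1 : ℕ+), true) :: z.toWord) := by
    conv_lhs => rw [← FreeGroup.mk_toWord (x := z)]
    rw [show (FreeGroup.of 1 : F) = FreeGroup.mk [((1 : ℕ+), true)] from rfl, FreeGroup.mul_mk]
    rfl
  rw [h1, FreeGroup.toWord_mk, FreeGroup.reduce.cons, FreeGroup.reduce_toWord]
  rcases hzw : z.toWord with _ | ⟨q, rest⟩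
  · rw [hzw] at hz; simp at hz
  · change (if (1 : ℕ+) = q.1 ∧ true = !q.2 then rest
        else ((1 : ℕ+), true) :: q :: rest).getLast? = some p
    by_cases hq : (1 : ℕ+) = q.1 ∧ true = !q.2
    · -- cancellation: q = (1, false), result is rest
      have hqe : q = ((1 : ℕ+), false) := by
        obtain ⟨h1', h2'⟩ := hq
        exact Prod.ext_iff.mpr ⟨h1'.symm, by revert h2'; cases q.2 <;> simp⟩
      have hrest : rest ≠ [] := by
        rintro rfl
        apply hne
        apply FreeGroup.toWord_injective
        rw [hzw, hqe, FreeGroup.toWord_inv, FreeGroup.toWord_of]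
        rfl
      rw [if_pos hq]
      rw [hzw] at hz
      rcases hre : rest with _ | ⟨r0, rest'⟩
      · exact absurd hre hrest
      · rw [hre, List.getLast?_cons_cons] at hz
        exact hz
    · rw [if_neg hq]
      rw [hzw] at hz
      rw [List.getLast?_cons_cons]
      exact hz

end WordCore


section Glue
open WordCore

/-- subgroup of elements of `F` whose reduced word avoids the letter `k` -/
def NoL (k : ℕ+) : Subgroup F where
  carrier := {w | ∀ p ∈ w.toWord, p.1 ≠ k}
  one_mem' := by
    intro p hp
    rw [FreeGroup.toWord_one] at hp
    simp at hp
  mul_mem' := by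
    intro a b ha hb p hp
    have := (FreeGroup.toWord_mul_sublist a b).subset hp
    rcases List.mem_append.mp this with h | h
    · exact ha p h
    · exact hb p h
  inv_mem' := by
    intro a ha p hp
    rw [FreeGroup.toWord_inv] at hp
    simp only [FreeGroup.invRev, List.mem_reverse, List.mem_map] at hp
    obtain ⟨q, hq, rfl⟩ := hp
    exact ha q hq

lemma of_mem_noL {j k : ℕ+} (h : j ≠ k) : FreeGroup.of j ∈ NoL k := by
  intro p hp
  rw [FreeGroup.toWord_of] at hp
  simp only [List.mem_singleton] at hp
  subst hp
  exact h

lemma noL_le_closure (k : ℕ+) : ∀ w ∈ NoL k,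
    w ∈ Subgroup.closure {g : F | ∃ j : ℕ+, j ≠ k ∧ g = FreeGroup.of j} := by
  have main : ∀ L : List (ℕ+ × Bool), (∀ p ∈ L, p.1 ≠ k) →
      FreeGroup.mk L ∈ Subgroup.closure {g : F | ∃ j : ℕ+, j ≠ k ∧ g = FreeGroup.of j} := by
    intro L
    induction L with
    | nil =>
      intro _
      rw [← FreeGroup.one_eq_mk]
      exact one_mem _
    | cons p L ih =>
      intro h
      obtain ⟨a, b⟩ := p
      have hsplit : FreeGroup.mk ((a, b) :: L) = FreeGroup.mk [(a, b)] * FreeGroup.mk L := by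
        rw [FreeGroup.mul_mk]
        rfl
      rw [hsplit]
      refine mul_mem ?_ (ih fun q hq => h q (List.mem_cons_of_mem _ hq))
      have ha : a ≠ k := h (a, b) List.mem_cons_self
      cases b
      · have : FreeGroup.mk [(a, false)] = (FreeGroup.of a)⁻¹ := by
          rw [show FreeGroup.of a = FreeGroup.mk [(a, true)] from rfl, FreeGroup.inv_mk]
          rfl
        rw [this]
        exact inv_mem (Subgroup.subset_closure ⟨a, ha, rfl⟩)
      · exact Subgroup.subset_closure ⟨a, ha, rfl⟩
  intro w hw
  rw [← FreeGroup.mk_toWord (x := w)]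
  exact main _ hw

lemma map_noL (f : F →* F) (k m : ℕ+) (hf : ∀ j : ℕ+, j ≠ k → f (FreeGroup.of j) ∈ NoL m) :
    ∀ w ∈ NoL k, f w ∈ NoL m := by
  intro w hw
  have h1 := noL_le_closure k w hw
  have hle : Subgroup.closure {g : F | ∃ j : ℕ+, j ≠ k ∧ g = FreeGroup.of j} ≤
      (NoL m).comap f := by
    rw [Subgroup.closure_le]
    rintro g ⟨j, hj, rfl⟩
    exact hf j hj
  exact hle h1

noncomputable def ΨF : F →* F := FreeGroup.lift fun j =>
  if j = 1 then FreeGroup.of 2 else if j = 2 then FreeGroup.of 1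
  else (FreeGroup.of 1)⁻¹ * FreeGroup.of j * FreeGroup.of 1

noncomputable def ΦF : F →* F := FreeGroup.lift fun j =>
  if j = 1 then FreeGroup.of 2 else if j = 2 then FreeGroup.of 1
  else FreeGroup.of 2 * FreeGroup.of j * (FreeGroup.of 2)⁻¹

lemma two_ne_one : (2 : ℕ+) ≠ 1 := by decide
lemma one_ne_two : (1 : ℕ+) ≠ 2 := by decide

lemma PhiPsi : ΦF.comp ΨF = MonoidHom.id F := by
  apply FreeGroup.ext_hom
  intro j
  simp only [MonoidHom.comp_apply, MonoidHom.id_apply, ΨF, FreeGroup.lift_apply_of]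
  by_cases h1 : j = 1
  · subst h1
    rw [if_pos rfl]
    simp [ΦF, FreeGroup.lift_apply_of, two_ne_one]
  by_cases h2 : j = 2
  · subst h2
    rw [if_neg h1, if_pos rfl]
    simp [ΦF, FreeGroup.lift_apply_of]
  · rw [if_neg h1, if_neg h2]
    rw [map_mul, map_mul, map_inv]
    have e1 : ΦF (FreeGroup.of 1) = FreeGroup.of 2 := by
      show FreeGroup.lift _ (FreeGroup.of 1) = _
      rw [FreeGroup.lift_apply_of, if_pos rfl]
    have ej : ΦF (FreeGroup.of j) = FreeGroup.of 2 * FreeGroup.of j * (FreeGroup.of 2)⁻¹ := by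
      show FreeGroup.lift _ (FreeGroup.of j) = _
      rw [FreeGroup.lift_apply_of, if_neg h1, if_neg h2]
    rw [e1, ej]
    group

lemma psi_inj : Function.Injective ΨF := by
  intro a b h
  have := congrArg ΦF h
  rw [← MonoidHom.comp_apply, ← MonoidHom.comp_apply, PhiPsi] at this
  simpa using this

lemma psi_of1 : ΨF (FreeGroup.of 1) = FreeGroup.of 2 := by
  simp [ΨF, FreeGroup.lift_apply_of]

lemma psi_noL : ∀ w ∈ NoL 1, ΨF w ∈ NoL 2 := by
  apply map_noL
  intro j hj
  simp only [ΨF, FreeGroup.lift_apply_of, if_neg hj]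
  by_cases h2 : j = 2
  · subst h2
    rw [if_pos rfl]
    exact of_mem_noL one_ne_two
  · rw [if_neg h2]
    exact mul_mem (mul_mem (inv_mem (of_mem_noL one_ne_two)) (of_mem_noL h2))
      (of_mem_noL one_ne_two)

lemma artin_apply_eq (i : ℕ+) (w : F) : artin i w = artinHom i w := rfl

lemma artin1_conj (w : F) :
    artin 1 w = FreeGroup.of 1 * ΨF w * (FreeGroup.of 1)⁻¹ := by
  have h : artinHom 1 = ((MulAut.conj (FreeGroup.of 1 : F)).toMonoidHom).comp ΨF := by
    apply FreeGroup.ext_hom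
    intro j
    simp only [MonoidHom.comp_apply, artinHom_of, MulEquiv.coe_toMonoidHom, MulAut.conj_apply,
      ΨF, FreeGroup.lift_apply_of]
    by_cases h1 : j = 1
    · subst h1
      rw [if_pos rfl]
      rw [artinFun, if_pos rfl]
      rfl
    by_cases h2 : j = 2
    · subst h2
      rw [if_neg h1, if_pos rfl]
      rw [artinFun, if_neg h1, if_pos (by decide : (2:ℕ+) = 1 + 1)]
      show x 1 = FreeGroup.of 1 * FreeGroup.of 1 * (FreeGroup.of 1)⁻¹
      rw [show x 1 = FreeGroup.of 1 from rfl]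
      group
    · rw [if_neg h1, if_neg h2]
      rw [artinFun, if_neg h1, if_neg (by rw [show (1:ℕ+)+1 = 2 from rfl]; exact h2)]
      show x j = FreeGroup.of 1 * ((FreeGroup.of 1)⁻¹ * FreeGroup.of j * FreeGroup.of 1) *
        (FreeGroup.of 1)⁻¹
      rw [show x j = FreeGroup.of j from rfl]
      group
  rw [artin_apply_eq, h]
  rfl

end Glue

section Glue2
open WordCore

noncomputable def rhoRep : Binf →* MulAut F := ρ

/-- key structural subgroup: elements acting nicely for the Larue invariant -/
noncomputable def SG : Subgroup Binf where
  carrier := {β | ρ β (x 1) = x 1 ∧ (∀ w ∈ NoL 1, ρ β w ∈ NoL 1) ∧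
    (∀ w ∈ NoL 1, (ρ β)⁻¹ w ∈ NoL 1)}
  one_mem' := by
    refine ⟨by simp, fun w hw => by simpa using hw, fun w hw => by simpa using hw⟩
  mul_mem' := by
    rintro β₁ β₂ ⟨h1, h2, h3⟩ ⟨h1', h2', h3'⟩
    refine ⟨?_, ?_, ?_⟩
    · rw [map_mul, MulAut.mul_apply, h1', h1]
    · intro w hw
      rw [map_mul, MulAut.mul_apply]
      exact h2 _ (h2' w hw)
    · intro w hw
      rw [map_mul, mul_inv_rev, MulAut.mul_apply]
      exact h3' _ (h3 w hw)
  inv_mem' := by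
    rintro β ⟨h1, h2, h3⟩
    refine ⟨?_, ?_, ?_⟩
    · rw [map_inv]
      conv_lhs => rw [← h1]
      exact (ρ β).symm_apply_apply (x 1)
    · intro w hw
      rw [map_inv]
      exact h3 w hw
    · intro w hw
      rw [map_inv, inv_inv]
      exact h2 w hw

lemma artin_symm_apply (i : ℕ+) (w : F) : (artin i)⁻¹ w = artinInvHom i w := rfl

lemma one_ne_succ (j : ℕ+) : (1 : ℕ+) ≠ j + 1 :=
  pnat_ne (by have := j.pos; push_cast; omega)

lemma succ_ne_one (j : ℕ+) : j + 1 ≠ (1 : ℕ+) := (one_ne_succ j).symm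

lemma sigma_succ_mem_SG (j : ℕ+) : σB (j + 1) ∈ SG := by
  refine ⟨?_, ?_, ?_⟩
  · rw [ρ_σB]
    show artinHom (j+1) (FreeGroup.of 1) = x 1
    rw [artinHom_of, af_other (one_ne_succ j) (one_ne_succ (j+1))]
  · rw [ρ_σB]
    intro w hw
    rw [artin_apply_eq]
    refine map_noL (artinHom (j+1)) 1 1 ?_ w hw
    intro k hk
    rw [artinHom_of, artinFun]
    by_cases h1 : k = j + 1
    · rw [if_pos h1]
      exact mul_mem (mul_mem (of_mem_noL (succ_ne_one j)) (of_mem_noL (succ_ne_one (j+1))))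
        (inv_mem (of_mem_noL (succ_ne_one j)))
    by_cases h2 : k = j + 1 + 1
    · rw [if_neg h1, if_pos h2]
      exact of_mem_noL (succ_ne_one j)
    · rw [if_neg h1, if_neg h2]
      exact of_mem_noL hk
  · rw [ρ_σB]
    intro w hw
    rw [artin_symm_apply]
    refine map_noL (artinInvHom (j+1)) 1 1 ?_ w hw
    intro k hk
    rw [artinInvHom_of, artinInvFun]
    by_cases h1 : k = j + 1
    · rw [if_pos h1]
      exact of_mem_noL (succ_ne_one (j+1))
    by_cases h2 : k = j + 1 + 1
    · rw [if_neg h1, if_pos h2]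
      exact mul_mem (mul_mem (inv_mem (of_mem_noL (succ_ne_one (j+1))))
        (of_mem_noL (succ_ne_one j))) (of_mem_noL (succ_ne_one (j+1)))
    · rw [if_neg h1, if_neg h2]
      exact of_mem_noL hk

lemma s_mem_SG (s : Binf →* Binf) (hs : ∀ i : ℕ+, s (σB i) = σB (i + 1)) (γ : Binf) :
    s γ ∈ SG := by
  have : γ ∈ SG.comap s := by
    apply PresentedGroup.generated_by
    intro j
    show s (σB j) ∈ SG
    rw [hs j]
    exact sigma_succ_mem_SG j
  exact this

/-- the Larue invariant: the image of `x 1` ends with `(x 1)⁻¹` -/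
def Cneg (w : F) : Prop := w.toWord.getLast? = some (1, false)

noncomputable def Good (g : Binf) : Prop := Cneg (ρ g (x 1))

lemma toWord_x1_inv : ((FreeGroup.of 1 : F)⁻¹).toWord = [((1:ℕ+), false)] := by
  rw [FreeGroup.toWord_inv, FreeGroup.toWord_of]
  rfl

lemma conj_cneg {z : F} {p : ℕ+ × Bool} (hz : z.toWord.getLast? = some p) (hp : p.1 ≠ 1) :
    Cneg (FreeGroup.of 1 * z * (FreeGroup.of 1)⁻¹) := by
  have hzne : z ≠ (FreeGroup.of 1)⁻¹ := by
    intro h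
    rw [h, toWord_x1_inv] at hz
    have : p = ((1:ℕ+), false) := by simpa using hz.symm
    exact hp (by rw [this])
  have h1 : (FreeGroup.of 1 * z).toWord.getLast? = some p :=
    getLast?_x1_mul hz hzne
  have hj : ∀ a ∈ (FreeGroup.of 1 * z).toWord.getLast?,
      ∀ b ∈ ((FreeGroup.of 1 : F)⁻¹).toWord.head?, RR a b := by
    intro a ha b hb
    rw [h1] at ha
    rw [toWord_x1_inv] at hb
    have ha' : a = p := by simpa using ha.symm
    have hb' : b = ((1:ℕ+), false) := by simpa using hb.symm
    subst ha'
    subst hb'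
    exact fun hcon => hp hcon.1
  have key : ((FreeGroup.of 1 * z) * (FreeGroup.of 1)⁻¹).toWord.getLast?
      = some ((1:ℕ+), false) := by
    rw [toWord_mul hj, List.getLast?_append_of_ne_nil _ (by rw [toWord_x1_inv]; simp),
      toWord_x1_inv]
    rfl
  exact key

lemma good_sigma1_mul {g : Binf} (hg : Good g) : Good (σB 1 * g) := by
  show Cneg (ρ (σB 1 * g) (x 1))
  rw [map_mul, MulAut.mul_apply, ρ_σB]
  set w := ρ g (x 1) with hwdef
  have h2 : (ΨF w).toWord.getLast? = some (2, false) :=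
    (classMap ΨF 2 psi_inj psi_of1 (fun v hv => psi_noL v hv) w.toWord.length w le_rfl).1
      false hg
  rw [artin1_conj]
  exact conj_cneg h2 two_ne_one

lemma good_s_mul {s : Binf →* Binf} (hs : ∀ i : ℕ+, s (σB i) = σB (i + 1))
    {γ g : Binf} (hg : Good g) : Good (s γ * g) := by
  obtain ⟨he1, heH, -⟩ := s_mem_SG s hs γ
  show Cneg (ρ (s γ * g) (x 1))
  rw [map_mul, MulAut.mul_apply]
  set w := ρ g (x 1) with hwdef
  have := (classMap (ρ (s γ)).toMonoidHom 1 (ρ (s γ)).injective he1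
    (fun v hv => heH v hv) w.toWord.length w le_rfl).1 false hg
  exact this

lemma good_stab_mul {s : Binf →* Binf} (hs : ∀ i : ℕ+, s (σB i) = σB (i + 1))
    {γ g : Binf} (hg : Good g) : Good (g * s γ) := by
  obtain ⟨he1, -, -⟩ := s_mem_SG s hs γ
  show Cneg (ρ (g * s γ) (x 1))
  rw [map_mul, MulAut.mul_apply, he1]
  exact hg

lemma good_base {s : Binf →* Binf} (hs : ∀ i : ℕ+, s (σB i) = σB (i + 1))
    (γ : Binf) : Good (σB 1 * s γ) := by
  obtain ⟨he1, -, -⟩ := s_mem_SG s hs γ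
  show Cneg (ρ (σB 1 * s γ) (x 1))
  rw [map_mul, MulAut.mul_apply, he1, ρ_σB, artin1_conj,
    show ΨF (x 1) = FreeGroup.of 2 from psi_of1]
  refine conj_cneg (p := ((2:ℕ+), true)) ?_ two_ne_one
  rw [FreeGroup.toWord_of]
  rfl

lemma good_ne_one {g : Binf} (hg : Good g) : g ≠ 1 := by
  rintro rfl
  have : Cneg (x 1) := by simpa [Good] using hg
  rw [Cneg, show x 1 = FreeGroup.of 1 from rfl, FreeGroup.toWord_of] at this
  simp [Prod.ext_iff] at this

end Glue2

theorem stmt17 (s : Binf →* Binf) (hs : ∀ i : ℕ+, s (σB i) = σB (i + 1))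
    (op : Binf → Binf → Binf) (hop : ∀ α β : Binf, op α β = α * s β * σB 1 * s α⁻¹) :
    (∀ α β γ : Binf, op α (op β γ) = op (op α β) (op α γ)) ∧
    ∃ A : Set Binf, (1 : Binf) ∈ A ∧ (∀ a ∈ A, ∀ b ∈ A, op a b ∈ A) ∧
      (∀ S : Set Binf, (1 : Binf) ∈ S → (∀ a ∈ S, ∀ b ∈ S, op a b ∈ S) → A ⊆ S) ∧
      (∀ a ∈ A, ∀ l : List Binf, (∀ b ∈ l, b ∈ A) → l ≠ [] → List.foldl op a l ≠ a) := by
  constructor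
  · -- left self-distributivity
    intro α β γ
    have comm1 : ∀ δ : Binf, σB 1 * s (s δ) = s (s δ) * σB 1 := by
      intro δ
      have hmem : δ ∈ Subgroup.comap (s.comp s) (Subgroup.centralizer {σB 1}) := by
        apply PresentedGroup.generated_by
        intro j
        simp only [Subgroup.mem_comap, MonoidHom.comp_apply]
        rw [Subgroup.mem_centralizer_iff]
        rintro z hz
        rw [Set.mem_singleton_iff] at hz
        subst hz
        show σB 1 * s (s (σB j)) = s (s (σB j)) * σB 1
        rw [hs j, hs (j + 1)]
        exact commB (by
          rw [← PNat.coe_lt_coe]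
          have := j.pos
          push_cast
          omega)
      have h2 : s (s δ) ∈ Subgroup.centralizer {σB 1} := Subgroup.mem_comap.mp hmem
      exact Subgroup.mem_centralizer_iff.mp h2 _ rfl
    have hA2 : ∀ X : Binf, (s (s α))⁻¹ * (σB 1 * (s (s α) * X)) = σB 1 * X := by
      intro X
      rw [← mul_assoc (σB 1), comm1 α, mul_assoc, inv_mul_cancel_left]
    have hC2 : ∀ X : Binf, σB 1 * (s (s γ) * X) = s (s γ) * (σB 1 * X) := by
      intro X
      rw [← mul_assoc, comm1 γ, mul_assoc]
    have hB2 : ∀ X : Binf, σB 1 * ((s (s β))⁻¹ * X) = (s (s β))⁻¹ * (σB 1 * X) := by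
      intro X
      have hcm : σB 1 * (s (s β))⁻¹ = (s (s β))⁻¹ * σB 1 :=
        (show Commute (σB 1) (s (s β)) from comm1 β).inv_right.eq
      rw [← mul_assoc, hcm, mul_assoc]
    have hbr : ∀ X : Binf, σB 1 * (σB (1+1) * (σB 1 * X)) = σB (1+1) * (σB 1 * (σB (1+1) * X)) := by
      intro X
      have hb := braidB 1
      rw [← mul_assoc, ← mul_assoc, hb, mul_assoc, mul_assoc]
    simp only [hop, map_mul, map_inv, hs, mul_inv_rev, inv_inv, mul_assoc,
      inv_mul_cancel_left, mul_inv_cancel_left]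
    simp only [hA2, hC2, hB2, hbr, inv_mul_cancel_left, mul_inv_cancel_left]
  · -- the one-generated subalgebra, acyclicity
    refine ⟨{z : Binf | ∀ S : Set Binf, (1 : Binf) ∈ S →
      (∀ a ∈ S, ∀ b ∈ S, op a b ∈ S) → z ∈ S}, ?_, ?_, ?_, ?_⟩
    · intro S h1 _
      exact h1
    · intro a ha b hb S h1 hcl
      exact hcl a (ha S h1 hcl) b (hb S h1 hcl)
    · intro S h1 hcl z hz
      exact hz S h1 hcl
    · intro a _ l _ hlne heq
      have op_eq : ∀ a b : Binf, op a b = a * (s b * (σB 1 * s a⁻¹)) := by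
        intro a b
        rw [hop, mul_assoc, mul_assoc]
      have good_piece : ∀ a b : Binf, Good (s b * (σB 1 * s a⁻¹)) := by
        intro a b
        exact good_s_mul hs (good_base hs a⁻¹)
      have key : ∀ l : List Binf, l ≠ [] → ∀ a : Binf,
          ∃ g : Binf, Good g ∧ List.foldl op a l = a * g := by
        intro l
        induction l with
        | nil => intro h; exact absurd rfl h
        | cons b t ih =>
          intro _ a
          rcases eq_or_ne t [] with rfl | ht
          · exact ⟨s b * (σB 1 * s a⁻¹), good_piece a b, by
              simp only [List.foldl]
              exact op_eq a b⟩
          · obtain ⟨g, hg, he⟩ := ih ht (op a b)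
            refine ⟨s b * (σB 1 * (s a⁻¹ * g)),
              good_s_mul hs (good_sigma1_mul (good_s_mul hs hg)), ?_⟩
            rw [List.foldl_cons, he, op_eq]
            simp only [mul_assoc]
      obtain ⟨g, hg, he⟩ := key l hlne a
      rw [heq] at he
      exact good_ne_one hg (left_eq_mul.mp he)
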